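/- In the triangle group T_d = ⟨a,b,c ∣ a², b², c², (ab)³, (ac)², (bc)^d⟩, the subgroup generated by a and b is isomorphic to the dihedral group of order 6, i.e. ⟨a,b⟩ ≅ ⟨x,y ∣ x², y², (xy)³⟩. -/

import Mathlib

/-- Relators of the triangle group
`T_d = ⟨a,b,c ∣ a², b², c², (ab)³, (ac)², (bc)^d⟩`,
with `a = of 0`, `b = of 1`, `c = of 2`. -/
def triRels (d : ℕ) : Set (FreeGroup (Fin 3)) :=
  {(FreeGroup.of 0)^2, (FreeGroup.of 1)^2, (FreeGroup.of 2)^2,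
   (FreeGroup.of 0 * FreeGroup.of 1)^3, (FreeGroup.of 0 * FreeGroup.of 2)^2,
   (FreeGroup.of 1 * FreeGroup.of 2)^d}

abbrev T (d : ℕ) := PresentedGroup (triRels d)

namespace TriAux

variable (d : ℕ)

abbrev Md := Matrix (Fin 2) (Fin 2) (ZMod d)

def Am : Md d := !![0,1;1,0]
def Bm : Md d := !![-1,1;0,1]
def Cm : Md d := !![-1,0;0,1]

lemma Am_sq : Am d * Am d = 1 := by
  simp [Am, Matrix.mul_fin_two, Matrix.one_fin_two]

lemma Bm_sq : Bm d * Bm d = 1 := by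
  simp [Bm, Matrix.mul_fin_two, Matrix.one_fin_two]

lemma Cm_sq : Cm d * Cm d = 1 := by
  simp [Cm, Matrix.mul_fin_two, Matrix.one_fin_two]

def A : (Md d)ˣ := ⟨Am d, Am d, Am_sq d, Am_sq d⟩
def B : (Md d)ˣ := ⟨Bm d, Bm d, Bm_sq d, Bm_sq d⟩
def C : (Md d)ˣ := ⟨Cm d, Cm d, Cm_sq d, Cm_sq d⟩

lemma A_sq : (A d)^2 = 1 := by ext : 1; simpa [sq, A] using Am_sq d
lemma B_sq : (B d)^2 = 1 := by ext : 1; simpa [sq, B] using Bm_sq d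
lemma C_sq : (C d)^2 = 1 := by ext : 1; simpa [sq, C] using Cm_sq d

lemma AB_cube : (A d * B d)^3 = -1 := by
  ext : 1
  show (Am d * Bm d)^3 = _
  simp [Am, Bm, pow_succ, Matrix.mul_fin_two, Matrix.one_fin_two]

lemma AC_sq : (A d * C d)^2 = -1 := by
  ext : 1
  show (Am d * Cm d)^2 = _
  simp [Am, Cm, pow_succ, Matrix.mul_fin_two, Matrix.one_fin_two]

lemma BC_pow (n : ℕ) : ((B d * C d)^n : (Md d)ˣ) = (!![1,(n:ZMod d);0,1] : Md d) := by
  induction n with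
  | zero => simp [Matrix.one_fin_two]
  | succ n ih =>
    rw [pow_succ, Units.val_mul, ih]
    show _ * (Bm d * Cm d) = _
    simp [Bm, Cm, Matrix.mul_fin_two]
    ring_nf

lemma BC_pow_d : (B d * C d)^d = 1 := by
  ext : 1
  rw [BC_pow]
  simp [Matrix.one_fin_two]

lemma neg_one_zpow (k : ℤ) :
    ((-1 : (Md d)ˣ))^k = 1 ∨ ((-1 : (Md d)ˣ))^k = -1 := by
  have h2 : ((-1 : (Md d)ˣ))^(2:ℤ) = 1 := by
    rw [zpow_two]; simp
  rcases Int.even_or_odd k with ⟨m, rfl⟩ | ⟨m, rfl⟩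
  · left
    rw [show m + m = 2 * m by ring, zpow_mul, h2, one_zpow]
  · right
    rw [zpow_add, zpow_mul, h2, one_zpow, one_mul, zpow_one]

def Zc : Subgroup (Md d)ˣ := Subgroup.zpowers (-1)

instance : (Zc d).Normal := by
  constructor
  rintro n hn g
  have hc : g * n * g⁻¹ = n := by
    rcases hn with ⟨k, rfl⟩
    have : g * (-1:(Md d)ˣ)^k = (-1)^k * g := by
      rcases neg_one_zpow d k with h | h <;> rw [h] <;> simp
    rw [this, mul_assoc, mul_inv_cancel, mul_one]
  rw [hc]; exact hn

lemma mem_Zc {u : (Md d)ˣ} (h : u ∈ Zc d) : u = 1 ∨ u = -1 := by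
  rcases h with ⟨k, rfl⟩
  exact neg_one_zpow d k

abbrev Q := (Md d)ˣ ⧸ Zc d

def p : (Md d)ˣ →* Q d := QuotientGroup.mk' (Zc d)

lemma p_eq_one_iff {u : (Md d)ˣ} : p d u = 1 ↔ u = 1 ∨ u = -1 := by
  constructor
  · intro h
    exact mem_Zc d ((QuotientGroup.eq_one_iff u).mp h)
  · rintro (rfl | rfl)
    · simp
    · exact (QuotientGroup.eq_one_iff _).mpr ⟨1, by simp⟩

/- value computations -/
lemma vAB : ((A d * B d : (Md d)ˣ) : Md d) = !![0,1;-1,1] := by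
  show Am d * Bm d = _
  simp [Am, Bm, Matrix.mul_fin_two]

lemma vAB2 : (((A d * B d)^2 : (Md d)ˣ) : Md d) = !![-1,1;-1,0] := by
  rw [sq, Units.val_mul, vAB]
  simp [Matrix.mul_fin_two]

lemma vA : ((A d : (Md d)ˣ) : Md d) = !![0,1;1,0] := rfl

lemma vAAB : ((A d * (A d * B d) : (Md d)ˣ) : Md d) = !![-1,1;0,1] := by
  rw [Units.val_mul, vAB, vA]
  simp [Matrix.mul_fin_two]

lemma vAAB2 : ((A d * (A d * B d)^2 : (Md d)ˣ) : Md d) = !![-1,0;-1,1] := by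
  rw [Units.val_mul, vAB2, vA]
  simp [Matrix.mul_fin_two]

section distinct
variable {d : ℕ} (hd : 3 ≤ d)
include hd

private lemma fact1lt : Fact (1 < d) := ⟨by omega⟩

/-- helper : a unit whose val has a 1 in a spot where ±1 has 0 is not killed by p -/
lemma p_ne_one_of_val₀₁ {u : (Md d)ˣ} (h01 : (u : Md d) 0 1 = 1) : p d u ≠ 1 := by
  haveI : Fact (1 < d) := fact1lt hd
  intro h
  rcases (p_eq_one_iff d).mp h with h | h <;>
    apply_fun (fun v : (Md d)ˣ => (v : Md d) 0 1) at h <;>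
    rw [h01] at h <;> simp [Matrix.one_apply] at h

lemma p_ne_one_of_val₁₀ {u : (Md d)ˣ} (h10 : (u : Md d) 1 0 = -1) : p d u ≠ 1 := by
  haveI : Fact (1 < d) := fact1lt hd
  intro h
  rcases (p_eq_one_iff d).mp h with h | h <;>
    apply_fun (fun v : (Md d)ˣ => (v : Md d) 1 0) at h <;>
    rw [h10] at h <;> simp [Matrix.one_apply] at h

end distinct

end TriAux

namespace TriAux

variable (d : ℕ)

def fgen : Fin 3 → Q d := ![p d (A d), p d (B d), p d (C d)]

lemma hrels : ∀ r ∈ triRels d, FreeGroup.lift (fgen d) r = 1 := by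
  have hpow : ∀ (u : (Md d)ˣ) (n : ℕ), (p d u)^n = p d (u^n) := fun u n => (map_pow _ _ _).symm
  rintro r (rfl | rfl | rfl | rfl | rfl | rfl) <;>
    simp only [map_pow, map_mul, FreeGroup.lift_apply_of, fgen, Matrix.cons_val_zero,
      Matrix.cons_val_one, Matrix.head_cons, Matrix.cons_val_two, Matrix.tail_cons]
  · rw [← map_pow, A_sq, map_one]
  · rw [← map_pow, B_sq, map_one]
  · rw [← map_pow, C_sq, map_one]
  · rw [← map_mul, ← map_pow, AB_cube]; exact (p_eq_one_iff d).mpr (Or.inr rfl)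
  · rw [← map_mul, ← map_pow, AC_sq]; exact (p_eq_one_iff d).mpr (Or.inr rfl)
  · rw [← map_mul, ← map_pow, BC_pow_d, map_one]

def π : T d →* Q d := PresentedGroup.toGroup (hrels d)

end TriAux

section main

open TriAux

variable (d : ℕ)

-- relations in T d
lemma Trel (r : FreeGroup (Fin 3)) (hr : r ∈ triRels d) :
    PresentedGroup.mk (triRels d) r = 1 :=
  (QuotientGroup.eq_one_iff _).mpr (Subgroup.subset_normalClosure hr)

lemma ha2 : (PresentedGroup.of (rels := triRels d) 0) * (PresentedGroup.of 0) = 1 := by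
  rw [← sq]
  have := Trel d ((FreeGroup.of 0)^2) (by simp [triRels])
  rw [map_pow] at this
  exact this

lemma hb2 : (PresentedGroup.of (rels := triRels d) 1) * (PresentedGroup.of 1) = 1 := by
  rw [← sq]
  have := Trel d ((FreeGroup.of 1)^2) (by simp [triRels])
  rw [map_pow] at this
  exact this

lemma hab3 :
    ((PresentedGroup.of (rels := triRels d) 0) * (PresentedGroup.of 1))^3 = 1 := by
  have := Trel d ((FreeGroup.of 0 * FreeGroup.of 1)^3) (by simp [triRels])
  rw [map_pow, map_mul] at this
  exact this

end main

section phi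

lemma zpow_congr3 {G : Type*} [Group G] {w : G} (hw : w^(3:ℕ) = 1) {m n : ℤ}
    (h : m % 3 = n % 3) : w^m = w^n := by
  have h3 : w^((3:ℕ):ℤ) = 1 := by rw [zpow_natCast, hw]
  obtain ⟨k, hk⟩ : ((3:ℕ):ℤ) ∣ (n - m) := Int.ModEq.dvd h
  calc w^m = w^m * (w^((3:ℕ):ℤ))^k := by rw [h3, one_zpow, mul_one]
  _ = w^(m + 3*k) := by rw [← zpow_mul, ← zpow_add]; norm_num
  _ = w^n := by rw [show m + 3*k = n by omega]

lemma val_add3 : ∀ i j : ZMod 3,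
    (((i + j).val : ℤ)) % 3 = ((i.val:ℤ) + (j.val:ℤ)) % 3 := by decide

lemma val_sub3 : ∀ i j : ZMod 3,
    (((j - i).val : ℤ)) % 3 = ((j.val:ℤ) - (i.val:ℤ)) % 3 := by decide

end phi

open TriAux in

/-- In the triangle group `T_d` (`d ≥ 3`), the subgroup generated
by `a` and `b` is isomorphic to the dihedral group of order 6,
i.e. `⟨x,y ∣ x², y², (xy)³⟩`. -/
theorem subgroup_ab_iso_dihedral (d : ℕ) (hd : 3 ≤ d) :
    Nonempty
      (↥(Subgroup.closure ({PresentedGroup.of 0, PresentedGroup.of 1} : Set (T d)))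
        ≃* DihedralGroup 3) := by
  classical
  set a : T d := PresentedGroup.of 0 with ha_def
  set b : T d := PresentedGroup.of 1 with hb_def
  have ha : a * a = 1 := ha2 d
  have hb : b * b = 1 := hb2 d
  set w : T d := a * b with hw_def
  have hw3 : w^(3:ℕ) = 1 := hab3 d
  have hainv : a⁻¹ = a := by
    rw [inv_eq_of_mul_eq_one_right ha]
  have hconj : a * w * a = w⁻¹ := by
    rw [hw_def, mul_inv_rev, inv_eq_of_mul_eq_one_right hb,
      inv_eq_of_mul_eq_one_right ha, ← mul_assoc, ha, one_mul]
  have hKey : ∀ m : ℤ, a * w^m * a = w^(-m) := by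
    intro m
    have h1 : (a * w * a⁻¹)^m = a * w^m * a⁻¹ := conj_zpow
    rw [hainv, hconj, inv_zpow, ← zpow_neg] at h1
    exact h1.symm
  have e1 : ∀ m n : ℤ, w^m * (a * w^n) = a * w^(n - m) := by
    intro m n
    calc w^m * (a * w^n) = (a * a) * w^m * (a * w^n) := by rw [ha, one_mul]
    _ = a * (a * w^m * a) * w^n := by group
    _ = a * w^(-m) * w^n := by rw [hKey]
    _ = a * w^(n - m) := by rw [mul_assoc, ← zpow_add, neg_add_eq_sub]
  have e2 : ∀ m n : ℤ, (a * w^m) * (a * w^n) = w^(n - m) := by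
    intro m n
    calc (a * w^m) * (a * w^n) = (a * w^m * a) * w^n := by group
    _ = w^(-m) * w^n := by rw [hKey]
    _ = w^(n - m) := by rw [← zpow_add, neg_add_eq_sub]
  -- the homomorphism from the dihedral group
  let φfun : DihedralGroup 3 → T d := fun x =>
    match x with
    | DihedralGroup.r i => w ^ ((i.val : ℤ))
    | DihedralGroup.sr i => a * w ^ ((i.val : ℤ))
  have hφmul : ∀ x y : DihedralGroup 3, φfun (x * y) = φfun x * φfun y := by
    rintro (i | i) (j | j)
    · show φfun (DihedralGroup.r (i + j)) = _
      show w ^ (((i+j).val : ℤ)) = w ^ ((i.val:ℤ)) * w ^ ((j.val:ℤ))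
      rw [← zpow_add]
      exact zpow_congr3 hw3 (val_add3 i j)
    · show φfun (DihedralGroup.sr (j - i)) = _
      show a * w ^ (((j - i).val : ℤ)) = w ^ ((i.val:ℤ)) * (a * w ^ ((j.val:ℤ)))
      rw [e1]
      exact congrArg _ (zpow_congr3 hw3 (val_sub3 i j))
    · show φfun (DihedralGroup.sr (i + j)) = _
      show a * w ^ (((i + j).val : ℤ)) = (a * w ^ ((i.val:ℤ))) * w ^ ((j.val:ℤ))
      rw [mul_assoc, ← zpow_add]
      exact congrArg _ (zpow_congr3 hw3 (val_add3 i j))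
    · show φfun (DihedralGroup.r (j - i)) = _
      show w ^ (((j - i).val : ℤ)) = (a * w ^ ((i.val:ℤ))) * (a * w ^ ((j.val:ℤ)))
      rw [e2]
      exact zpow_congr3 hw3 (val_sub3 i j)
  let φ : DihedralGroup 3 →* T d := MonoidHom.mk' φfun hφmul
  -- values of π on generators
  have hπa : TriAux.π d a = p d (A d) := by
    rw [ha_def]
    show TriAux.π d (PresentedGroup.of 0) = _
    rw [TriAux.π, PresentedGroup.toGroup.of]
    rfl
  have hπb : TriAux.π d b = p d (B d) := by
    rw [hb_def]
    show TriAux.π d (PresentedGroup.of 1) = _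
    rw [TriAux.π, PresentedGroup.toGroup.of]
    rfl
  have hπw : TriAux.π d w = p d (A d * B d) := by
    rw [hw_def, map_mul, hπa, hπb, map_mul]
  -- the five nondegeneracy facts
  have nAB : p d (A d * B d) ≠ 1 := p_ne_one_of_val₀₁ hd (by rw [vAB]; simp)
  have nAB2 : (p d (A d * B d))^(2:ℕ) ≠ 1 := by
    rw [← map_pow]
    exact p_ne_one_of_val₀₁ hd (by rw [vAB2]; simp)
  have nA : p d (A d) ≠ 1 := p_ne_one_of_val₀₁ hd (by rw [vA]; simp)
  have nAAB : p d (A d) * p d (A d * B d) ≠ 1 := by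
    rw [← map_mul]
    exact p_ne_one_of_val₀₁ hd (by rw [vAAB]; simp)
  have nAAB2 : p d (A d) * (p d (A d * B d))^(2:ℕ) ≠ 1 := by
    rw [← map_pow, ← map_mul]
    exact p_ne_one_of_val₁₀ hd (by rw [vAAB2]; simp)
  -- injectivity of π ∘ φ
  have hinj : Function.Injective ((TriAux.π d).comp φ) := by
    rw [injective_iff_map_eq_one]
    rintro (i | i) h
    · have h' : (p d (A d * B d)) ^ (i.val) = 1 := by
        have : (TriAux.π d) (w ^ ((i.val : ℤ))) = 1 := h
        rw [map_zpow, hπw, zpow_natCast] at this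
        exact this
      have hv : i.val < 3 := ZMod.val_lt i
      interval_cases hi : i.val
      · have : i = 0 := (ZMod.val_eq_zero i).mp hi
        rw [this]
        exact DihedralGroup.one_def.symm
      · rw [pow_one] at h'
        exact absurd h' nAB
      · exact absurd h' nAB2
    · have h' : p d (A d) * (p d (A d * B d)) ^ (i.val) = 1 := by
        have : (TriAux.π d) (a * w ^ ((i.val : ℤ))) = 1 := h
        rw [map_mul, map_zpow, hπw, hπa, zpow_natCast] at this
        exact this
      have hv : i.val < 3 := ZMod.val_lt i
      interval_cases hi : i.val
      · rw [pow_zero, mul_one] at h'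
        exact absurd h' nA
      · rw [pow_one] at h'
        exact absurd h' nAAB
      · exact absurd h' nAAB2
  have hφinj : Function.Injective φ := fun x y hxy => hinj (by simp [MonoidHom.comp_apply, hxy])
  -- range of φ
  have hrange : φ.range = Subgroup.closure ({a, b} : Set (T d)) := by
    apply le_antisymm
    · rintro x ⟨y, rfl⟩
      have hamem : a ∈ Subgroup.closure ({a, b} : Set (T d)) :=
        Subgroup.subset_closure (by simp)
      have hbmem : b ∈ Subgroup.closure ({a, b} : Set (T d)) :=
        Subgroup.subset_closure (by simp)
      have hwmem : w ∈ Subgroup.closure ({a, b} : Set (T d)) := by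
        rw [hw_def]; exact mul_mem hamem hbmem
      rcases y with i | i
      · exact Subgroup.zpow_mem _ hwmem _
      · exact mul_mem hamem (Subgroup.zpow_mem _ hwmem _)
    · rw [Subgroup.closure_le]
      rintro x (rfl | rfl)
      · refine ⟨DihedralGroup.sr 0, ?_⟩
        show a * w ^ (((0 : ZMod 3).val : ℤ)) = a
        norm_num [ZMod.val_zero]
      · refine ⟨DihedralGroup.sr 1, ?_⟩
        show a * w ^ (((1 : ZMod 3).val : ℤ)) = b
        have h1 : (((1 : ZMod 3).val : ℤ)) = 1 := by decide
        rw [h1, zpow_one, hw_def, ← mul_assoc, ha, one_mul]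
  exact ⟨((MonoidHom.ofInjective hφinj).trans (MulEquiv.subgroupCongr hrange)).symm⟩
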